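/- Let p be a gauge with constant c_p and let T be a bounded operator on a Hilbert space with ‖T^n‖ ≤ p(n) for all n, such that the sequence ‖T^n‖/p(n) does not almost converge to 0. Then the spectral radius of T equals c_p. -/

import Mathlib

noncomputable section

/-- A complex sequence is bounded. -/
def IsBoundedSeq (u : ℕ → ℂ) : Prop := ∃ C : ℝ, ∀ n, ‖u n‖ ≤ C

/-- Almost convergence (Lorentz) of a complex sequence: the Cesàro averages
`(1/(n+1)) ∑_{i=k}^{k+n} u i` converge to `c` uniformly in `k`. -/
def AlmostConvergentC (u : ℕ → ℂ) (c : ℂ) : Prop :=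
  ∀ ε : ℝ, 0 < ε → ∃ N : ℕ, ∀ n ≥ N, ∀ k : ℕ,
    ‖(∑ i ∈ Finset.range (n + 1), u (k + i)) / ((n : ℂ) + 1) - c‖ < ε

/-- Almost convergence (Lorentz) of a real sequence. -/
def AlmostConvergentR (u : ℕ → ℝ) (c : ℝ) : Prop :=
  ∀ ε : ℝ, 0 < ε → ∃ N : ℕ, ∀ n ≥ N, ∀ k : ℕ,
    |(∑ i ∈ Finset.range (n + 1), u (k + i)) / ((n : ℝ) + 1) - c| < ε

/-- A Banach limit: a shift-invariant positive linear functional on `ℓ^∞(ℕ, ℂ)`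
with `L(1) = 1 = ‖L‖`. -/
structure BanachLimit where
  toFun : (ℕ → ℂ) → ℂ
  map_add' : ∀ u v : ℕ → ℂ, IsBoundedSeq u → IsBoundedSeq v →
    toFun (u + v) = toFun u + toFun v
  map_smul' : ∀ (a : ℂ) (u : ℕ → ℂ), IsBoundedSeq u → toFun (a • u) = a * toFun u
  norm_le' : ∀ (u : ℕ → ℂ) (C : ℝ), (∀ n, ‖u n‖ ≤ C) → ‖toFun u‖ ≤ C
  map_one' : toFun (fun _ => 1) = 1
  shift' : ∀ u : ℕ → ℂ, IsBoundedSeq u → toFun (fun n => u (n + 1)) = toFun u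
  pos' : ∀ u : ℕ → ℂ, (∀ n, ∃ r : ℝ, 0 ≤ r ∧ u n = (r : ℂ)) →
    ∃ r : ℝ, 0 ≤ r ∧ toFun u = (r : ℂ)

/-- A gauge with constant `c`: `p : ℕ → (0,∞)` with `p(n+1)/p(n)` strongly almost
convergent to `c > 0`. -/
def IsGauge (p : ℕ → ℝ) (c : ℝ) : Prop :=
  (∀ n, 0 < p n) ∧ 0 < c ∧ AlmostConvergentR (fun n => |p (n + 1) / p n - c|) 0


-- helpers
lemma ac_sum_lt {e : ℕ → ℝ} (he : ∀ n, 0 ≤ e n) {δ : ℝ} {N : ℕ}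
    (h : ∀ n ≥ N, ∀ k : ℕ, |(∑ i ∈ Finset.range (n + 1), e (k + i)) / ((n : ℝ) + 1) - 0| < δ) :
    ∀ L k : ℕ, N + 1 ≤ L → (∑ i ∈ Finset.range L, e (k + i)) < δ * L := by
  intro L k hL
  obtain ⟨n, rfl⟩ : ∃ n, L = n + 1 := ⟨L - 1, by omega⟩
  have h1 := h n (by omega) k
  have hs : 0 ≤ ∑ i ∈ Finset.range (n + 1), e (k + i) :=
    Finset.sum_nonneg fun i _ => he _
  have hpos : (0:ℝ) < (n:ℝ) + 1 := by positivity
  rw [sub_zero, abs_of_nonneg (by positivity)] at h1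
  rw [div_lt_iff₀ hpos] at h1
  calc (∑ i ∈ Finset.range (n + 1), e (k + i)) < δ * ((n:ℝ)+1) := h1
    _ = δ * ((n+1 : ℕ) : ℝ) := by push_cast; ring

lemma prod_ratio (p : ℕ → ℝ) (hp : ∀ n, 0 < p n) (k n : ℕ) :
    p (k + n) = p k * ∏ i ∈ Finset.range n, (p (k + i + 1) / p (k + i)) := by
  induction n with
  | zero => simp
  | succ n ih =>
    rw [Finset.prod_range_succ, ← mul_assoc, ← ih, ← Nat.add_assoc]
    rw [mul_div_cancel₀ _ (hp (k+n)).ne']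


set_option maxHeartbeats 1000000 in
lemma gauge_growth (p : ℕ → ℝ) (c : ℝ) (hp : IsGauge p c) {c' : ℝ} (hc' : c < c') :
    ∃ M : ℝ, 0 < M ∧ ∀ n : ℕ, p n ≤ M * c' ^ n := by
  obtain ⟨hppos, hc, hac⟩ := hp
  have hc'0 : 0 < c' := hc.trans hc'
  have hrat : 1 < c' / c := (one_lt_div hc).mpr hc'
  set δ : ℝ := c * Real.log (c' / c) with hδ
  have hδ0 : 0 < δ := mul_pos hc (Real.log_pos hrat)
  obtain ⟨N, hN⟩ := hac δ hδ0
  have hsum := ac_sum_lt (e := fun n => |p (n + 1) / p n - c|) (fun n => abs_nonneg _) hN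
  have key : ∀ n : ℕ, N + 1 ≤ n → p n ≤ p 0 * c' ^ n := by
    intro n hn
    have h1 : p n = p 0 * ∏ i ∈ Finset.range n, (p (0 + i + 1) / p (0 + i)) := by
      simpa using prod_ratio p hppos 0 n
    have h2 : ∏ i ∈ Finset.range n, (p (0 + i + 1) / p (0 + i)) ≤
        ∏ i ∈ Finset.range n, (c * Real.exp (|p (i + 1) / p i - c| / c)) := by
      apply Finset.prod_le_prod
      · intro i _; exact le_of_lt (div_pos (hppos _) (hppos _))
      · intro i _
        simp only [Nat.zero_add]
        have le1 : p (i + 1) / p i ≤ c + |p (i + 1) / p i - c| := by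
          cases abs_cases (p (i + 1) / p i - c) with
          | inl h => linarith [h.1]
          | inr h => linarith [h.1, abs_nonneg (p (i + 1) / p i - c)]
        have le2 : c + |p (i + 1) / p i - c| ≤ c * Real.exp (|p (i + 1) / p i - c| / c) := by
          have := Real.add_one_le_exp (|p (i + 1) / p i - c| / c)
          have h3 : c * (|p (i + 1) / p i - c| / c + 1) ≤ c * Real.exp (|p (i + 1) / p i - c| / c) :=
            mul_le_mul_of_nonneg_left this hc.le
          calc c + |p (i + 1) / p i - c| = c * (|p (i + 1) / p i - c| / c + 1) := by
                rw [mul_add, mul_one, mul_div_cancel₀ _ hc.ne', add_comm]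
            _ ≤ _ := h3
        exact le1.trans le2
    have h3 : ∏ i ∈ Finset.range n, (c * Real.exp (|p (i + 1) / p i - c| / c))
        = c ^ n * Real.exp ((∑ i ∈ Finset.range n, |p (i + 1) / p i - c|) / c) := by
      rw [Finset.prod_mul_distrib, Finset.prod_const, ← Real.exp_sum, ← Finset.sum_div,
        Finset.card_range]
    have h4 : (∑ i ∈ Finset.range n, |p (i + 1) / p i - c|) < δ * n := by
      simpa using hsum n 0 hn
    have h5 : Real.exp ((∑ i ∈ Finset.range n, |p (i + 1) / p i - c|) / c)
        ≤ Real.exp (δ * n / c) := by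
      apply Real.exp_le_exp.mpr
      gcongr
    have h6 : Real.exp (δ * n / c) = (c' / c) ^ n := by
      have : δ * n / c = (n : ℝ) * Real.log (c' / c) := by
        rw [hδ]; field_simp
      rw [this, Real.exp_nat_mul, Real.exp_log (by positivity)]
    have h7 : c ^ n * (c' / c) ^ n = c' ^ n := by
      rw [← mul_pow]; congr 1; field_simp
    calc p n = p 0 * ∏ i ∈ Finset.range n, (p (0 + i + 1) / p (0 + i)) := h1
      _ ≤ p 0 * (c ^ n * Real.exp ((∑ i ∈ Finset.range n, |p (i + 1) / p i - c|) / c)) := by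
          apply mul_le_mul_of_nonneg_left _ (hppos 0).le
          rw [← h3]; exact h2
      _ ≤ p 0 * (c ^ n * (c' / c) ^ n) := by
          apply mul_le_mul_of_nonneg_left _ (hppos 0).le
          exact mul_le_mul_of_nonneg_left (h5.trans_eq h6) (by positivity)
      _ = p 0 * c' ^ n := by rw [h7]
  refine ⟨(∑ j ∈ Finset.range (N + 2), p j / c' ^ j) + p 0, by
    have : 0 ≤ ∑ j ∈ Finset.range (N + 2), p j / c' ^ j :=
      Finset.sum_nonneg fun j _ => div_nonneg (hppos j).le (by positivity)
    linarith [hppos 0], ?_⟩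
  intro n
  by_cases hn : N + 1 ≤ n
  · calc p n ≤ p 0 * c' ^ n := key n hn
      _ ≤ _ := by
        apply mul_le_mul_of_nonneg_right _ (by positivity)
        have : 0 ≤ ∑ j ∈ Finset.range (N + 2), p j / c' ^ j :=
          Finset.sum_nonneg fun j _ => div_nonneg (hppos j).le (by positivity)
        linarith
  · push_neg at hn
    have hmem : n ∈ Finset.range (N + 2) := Finset.mem_range.mpr (by omega)
    have h1 : p n / c' ^ n ≤ ∑ j ∈ Finset.range (N + 2), p j / c' ^ j :=
      Finset.single_le_sum (f := fun j => p j / c' ^ j)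
        (fun j _ => div_nonneg (hppos j).le (by positivity)) hmem
    have h2 : p n = (p n / c' ^ n) * c' ^ n := by field_simp
    rw [h2]
    apply mul_le_mul_of_nonneg_right _ (by positivity)
    linarith [hppos 0]



set_option maxHeartbeats 1000000 in
lemma key_ac (p : ℕ → ℝ) (c : ℝ) (hp : IsGauge p c)
    {H : Type*} [NormedAddCommGroup H] [InnerProductSpace ℂ H] [CompleteSpace H]
    (T : H →L[ℂ] H) (hdom : ∀ n : ℕ, 1 ≤ n → ‖T ^ n‖ ≤ p n)
    {t : ℝ} (ht0 : 0 < t) (htc : t < c)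
    (D : ℕ) (hD : ∀ n, D ≤ n → ‖T ^ n‖ ≤ t ^ n) :
    AlmostConvergentR (fun n => ‖T ^ n‖ / p n) 0 := by
  classical
  obtain ⟨hppos, hc, hac⟩ := hp
  set e : ℕ → ℝ := fun n => |p (n + 1) / p n - c| with he
  have he0 : ∀ n, 0 ≤ e n := fun n => abs_nonneg _
  set a : ℕ → ℝ := fun n => ‖T ^ n‖ / p n with ha
  have ha0 : ∀ m, 0 ≤ a m := fun m => div_nonneg (norm_nonneg _) (hppos m).le
  set M₀ : ℝ := max 1 (1 / p 0) with hM₀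
  have hM₀1 : 1 ≤ M₀ := le_max_left _ _
  have hM₀0 : 0 < M₀ := lt_of_lt_of_le one_pos hM₀1
  have haM : ∀ m, a m ≤ M₀ := by
    intro m
    match m with
    | 0 =>
      have h1 : ‖T ^ 0‖ ≤ 1 := by
        rw [pow_zero, ContinuousLinearMap.one_def]
        exact ContinuousLinearMap.norm_id_le
      calc a 0 = ‖T ^ 0‖ / p 0 := rfl
        _ ≤ 1 / p 0 := div_le_div₀ (by norm_num) h1 (hppos 0) le_rfl
        _ ≤ M₀ := le_max_right _ _
    | Nat.succ m =>
      have h1 := hdom (m + 1) (by omega)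
      calc a (m + 1) ≤ 1 := (div_le_one (hppos _)).mpr h1
        _ ≤ M₀ := hM₀1
  intro ε hε
  have hct : 1 < c / t := (one_lt_div ht0).mpr htc
  set δm : ℝ := c / 4 * Real.log (c / t) with hδm
  have hδm0 : 0 < δm := mul_pos (by positivity) (Real.log_pos hct)
  set ρ : ℝ := (t / c) * Real.exp (2 * δm / c) with hρ
  have hρ0 : 0 < ρ := by positivity
  have hρsq : ρ ^ 2 = t / c := by
    have h1 : Real.exp (2 * δm / c) ^ 2 = Real.exp ((2 : ℕ) * (2 * δm / c)) := by
      rw [Real.exp_nat_mul]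
    have h2 : ((2 : ℕ) : ℝ) * (2 * δm / c) = Real.log (c / t) := by
      rw [hδm]; push_cast; field_simp; ring
    have h3 : Real.exp (2 * δm / c) ^ 2 = c / t := by
      rw [h1, h2, Real.exp_log (by positivity)]
    rw [hρ, mul_pow, h3]
    field_simp
  have hρ1 : ρ < 1 := by nlinarith [hρ0, hρsq, (div_lt_one hc).mpr htc]
  obtain ⟨Nm, hNm⟩ := hac δm hδm0
  have hsum_m := ac_sum_lt (e := e) he0 hNm
  obtain ⟨G₀, hG₀⟩ := exists_pow_lt_of_lt_one (show (0:ℝ) < ε / 4 by positivity) hρ1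
  obtain ⟨G, hGNm, hGD, hGG₀⟩ : ∃ G : ℕ, Nm + 1 ≤ G ∧ D ≤ G ∧ G₀ ≤ G :=
    ⟨max (max (Nm + 1) D) (G₀ + 1), le_trans (le_max_left _ _) (le_max_left _ _),
      le_trans (le_max_right _ _) (le_max_left _ _),
      le_trans (Nat.le_succ _) (le_max_right _ _)⟩
  have hG1 : 1 ≤ G := le_trans (by omega) hGNm
  have hρG : ρ ^ G < ε / 4 :=
    lt_of_le_of_lt (pow_le_pow_of_le_one hρ0.le hρ1.le hGG₀) hG₀
  -- per-point bound
  have hgood : ∀ m : ℕ, G + 1 ≤ m → (∀ j, m - G ≤ j → j < m → e j ≤ c / 2) → a m ≤ ρ ^ G := by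
    intro m hm hj
    set s : ℕ := m - G with hs
    have hs1 : 1 ≤ s := by omega
    have hsm : s + G = m := by omega
    have hTm : ‖T ^ m‖ ≤ p s * t ^ G := by
      have h1 : T ^ m = T ^ s * T ^ G := by rw [← pow_add, hsm]
      calc ‖T ^ m‖ = ‖T ^ s * T ^ G‖ := by rw [h1]
        _ ≤ ‖T ^ s‖ * ‖T ^ G‖ := norm_mul_le _ _
        _ ≤ p s * t ^ G := mul_le_mul (hdom s hs1) (hD G hGD) (norm_nonneg _) (hppos s).le
    have hsumG : (∑ i ∈ Finset.range G, e (s + i)) < δm * G := hsum_m G s (by omega)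
    have hplow : p s * (c ^ G * Real.exp (-(2 * (δm * G) / c))) ≤ p m := by
      have h1 : p m = p s * ∏ i ∈ Finset.range G, (p (s + i + 1) / p (s + i)) := by
        rw [← hsm]; exact prod_ratio p hppos s G
      have h2 : ∀ i ∈ Finset.range G,
          c * Real.exp (-(2 * e (s + i) / c)) ≤ p (s + i + 1) / p (s + i) := by
        intro i hi
        have hie : e (s + i) ≤ c / 2 :=
          hj (s + i) (by omega) (by rw [Finset.mem_range] at hi; omega)
        have hie0 : 0 ≤ e (s + i) := he0 _
        have hlow : c - e (s + i) ≤ p (s + i + 1) / p (s + i) := by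
          have h := abs_sub_abs_le_abs_sub (c : ℝ) (p (s + i + 1) / p (s + i))
          have h2 := abs_nonneg (p (s + i + 1) / p (s + i) - c)
          have h3 : |c - p (s + i + 1) / p (s + i)| = e (s + i) := by
            rw [he, abs_sub_comm]
          cases abs_cases (p (s + i + 1) / p (s + i) - c) with
          | inl hcase => have := hcase.1; rw [he] at *; simp only at *; linarith
          | inr hcase => have := hcase.1; rw [he] at *; simp only at *; linarith
        have hexp : c * Real.exp (-(2 * e (s + i) / c)) ≤ c - e (s + i) := by
          set u : ℝ := e (s + i) / c with hu
          have hu0 : 0 ≤ u := by positivity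
          have hu2 : u ≤ 1 / 2 := by
            rw [hu, div_le_div_iff₀ hc (by norm_num)]; linarith
          have hkey : Real.exp (-(2 * u)) ≤ 1 - u := by
            have h1 := Real.add_one_le_exp (2 * u)
            have h2 : Real.exp (-(2 * u)) * Real.exp (2 * u) = 1 := by
              rw [← Real.exp_add]; simp
            nlinarith [Real.exp_pos (-(2 * u)), Real.exp_pos (2 * u)]
          have harg : -(2 * e (s + i) / c) = -(2 * u) := by rw [hu]; ring
          rw [harg]
          calc c * Real.exp (-(2 * u)) ≤ c * (1 - u) := by
                exact mul_le_mul_of_nonneg_left hkey hc.le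
            _ = c - e (s + i) := by rw [hu]; field_simp
        linarith
      have h3 : (∑ i ∈ Finset.range G, -(2 * e (s + i) / c))
          = -(2 * (∑ i ∈ Finset.range G, e (s + i)) / c) := by
        rw [Finset.sum_neg_distrib, Finset.mul_sum, Finset.sum_div]
      calc p s * (c ^ G * Real.exp (-(2 * (δm * G) / c)))
          ≤ p s * (c ^ G * Real.exp (-(2 * (∑ i ∈ Finset.range G, e (s + i)) / c))) := by
            apply mul_le_mul_of_nonneg_left _ (hppos s).le
            apply mul_le_mul_of_nonneg_left _ (by positivity)
            apply Real.exp_le_exp.mpr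
            have h4 : (∑ i ∈ Finset.range G, e (s + i)) ≤ δm * G := hsumG.le
            have hc2 : 0 < c := hc
            rw [neg_le_neg_iff]
            gcongr
        _ = p s * ∏ i ∈ Finset.range G, (c * Real.exp (-(2 * e (s + i) / c))) := by
            rw [Finset.prod_mul_distrib, Finset.prod_const, Finset.card_range, ← Real.exp_sum, h3]
        _ ≤ p s * ∏ i ∈ Finset.range G, (p (s + i + 1) / p (s + i)) := by
            apply mul_le_mul_of_nonneg_left _ (hppos s).le
            exact Finset.prod_le_prod (fun i _ => by positivity) h2
        _ = p m := h1.symm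
    have hfinal : a m ≤ (p s * t ^ G) / (p s * (c ^ G * Real.exp (-(2 * (δm * G) / c)))) :=
      div_le_div₀ (mul_nonneg (hppos s).le (by positivity)) hTm
        (mul_pos (hppos s) (mul_pos (pow_pos hc G) (Real.exp_pos _))) hplow
    have hGc : (G : ℝ) * (2 * δm / c) = 2 * (δm * (G : ℝ)) / c := by ring
    have hrhoG : ρ ^ G = t ^ G * Real.exp (2 * (δm * (G : ℝ)) / c) / c ^ G := by
      rw [hρ, mul_pow, div_pow, ← Real.exp_nat_mul, hGc]; ring
    calc a m ≤ _ := hfinal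
      _ = ρ ^ G := by
        rw [hrhoG, Real.exp_neg]
        rw [div_eq_div_iff
          (mul_pos (hppos s) (mul_pos (pow_pos hc G) (inv_pos.mpr (Real.exp_pos _)))).ne'
          (pow_pos hc G).ne']
        field_simp [(hppos s).ne', (Real.exp_pos (2 * (δm * (G : ℝ)) / c)).ne']
  -- wild count and window estimate
  set δw : ℝ := ε * c / (64 * M₀ * ((G : ℝ) + 1)) with hδw
  have hδw0 : 0 < δw := by
    apply div_pos (mul_pos hε hc)
    positivity
  obtain ⟨Nw, hNw⟩ := hac δw hδw0
  have hsum_w := ac_sum_lt (e := e) he0 hNw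
  refine ⟨max (max (Nw + 1) G) ⌈4 * M₀ * ((G : ℝ) + 1) / ε⌉₊, ?_⟩
  intro n hn k
  have hnNw : Nw + 1 ≤ n := le_trans (le_trans (le_max_left _ _) (le_max_left _ _)) hn
  have hnG : G ≤ n := le_trans (le_trans (le_max_right _ _) (le_max_left _ _)) hn
  have hn2 : 4 * M₀ * ((G : ℝ) + 1) ≤ ε * ((n : ℝ) + 1) := by
    have hnN₂ : ⌈4 * M₀ * ((G : ℝ) + 1) / ε⌉₊ ≤ n := le_trans (le_max_right _ _) hn
    have h1 : 4 * M₀ * ((G : ℝ) + 1) / ε ≤ ((⌈4 * M₀ * ((G : ℝ) + 1) / ε⌉₊ : ℕ) : ℝ) :=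
      Nat.le_ceil _
    have h2 : ((⌈4 * M₀ * ((G : ℝ) + 1) / ε⌉₊ : ℕ) : ℝ) ≤ (n : ℝ) := Nat.cast_le.mpr hnN₂
    rw [div_le_iff₀ hε] at h1
    nlinarith
  clear hn
  set Wd : Finset ℕ := (Finset.Ico (k - G) (k + n)).filter (fun j => c / 2 < e j) with hWd
  have hWdcard : (Wd.card : ℝ) * (c / 2) ≤ δw * ((n : ℝ) + (G : ℝ)) := by
    have hL : Nw + 1 ≤ (k + n) - (k - G) := by omega
    have h1 : (∑ j ∈ Finset.Ico (k - G) (k + n), e j) < δw * (((k + n) - (k - G) : ℕ) : ℝ) := by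
      rw [Finset.sum_Ico_eq_sum_range]
      exact hsum_w ((k + n) - (k - G)) (k - G) hL
    have h2 : (∑ j ∈ Wd, e j) ≤ ∑ j ∈ Finset.Ico (k - G) (k + n), e j :=
      Finset.sum_le_sum_of_subset_of_nonneg (Finset.filter_subset _ _) (fun j _ _ => he0 j)
    have h3 : (Wd.card : ℝ) * (c / 2) ≤ ∑ j ∈ Wd, e j := by
      have := Finset.card_nsmul_le_sum Wd e (c / 2) (fun x hx => by
        rw [hWd, Finset.mem_filter] at hx
        exact hx.2.le)
      rwa [nsmul_eq_mul] at this
    have h4 : (((k + n) - (k - G) : ℕ) : ℝ) ≤ (n : ℝ) + (G : ℝ) := by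
      have : (k + n) - (k - G) ≤ n + G := by omega
      calc (((k + n) - (k - G) : ℕ) : ℝ) ≤ ((n + G : ℕ) : ℝ) := Nat.cast_le.mpr this
        _ = (n : ℝ) + (G : ℝ) := by push_cast; ring
    have h5 : δw * (((k + n) - (k - G) : ℕ) : ℝ) ≤ δw * ((n : ℝ) + (G : ℝ)) :=
      mul_le_mul_of_nonneg_left h4 hδw0.le
    linarith
  set I : Finset ℕ := Finset.Ico k (k + n + 1) with hI
  have hIcard : I.card = n + 1 := by rw [hI, Nat.card_Ico]; omega
  have hsum_eq : (∑ i ∈ Finset.range (n + 1), a (k + i)) = ∑ m ∈ I, a m := by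
    rw [hI, Finset.sum_Ico_eq_sum_range, show k + n + 1 - k = n + 1 from by omega]
  set B : Finset ℕ := I.filter
    (fun m => ¬ (G + 1 ≤ m ∧ ∀ j, m - G ≤ j → j < m → e j ≤ c / 2)) with hB
  have hBsub : B ⊆ Finset.Icc 0 G ∪ Wd.biUnion (fun j => Finset.Ioc j (j + G)) := by
    intro m hm
    rw [hB, Finset.mem_filter] at hm
    obtain ⟨hmI, hmn⟩ := hm
    have hmIk := Finset.mem_Ico.mp hmI
    rw [Finset.mem_union]
    by_cases hmG : G + 1 ≤ m
    · right
      push_neg at hmn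
      obtain ⟨j, hj1, hj2, hj3⟩ := hmn hmG
      rw [Finset.mem_biUnion]
      refine ⟨j, ?_, ?_⟩
      · rw [hWd, Finset.mem_filter, Finset.mem_Ico]
        exact ⟨⟨by omega, by omega⟩, hj3⟩
      · rw [Finset.mem_Ioc]
        exact ⟨hj2, by omega⟩
    · left
      rw [Finset.mem_Icc]
      omega
  have hBcard : (B.card : ℝ) ≤ ((G : ℝ) + 1) + (Wd.card : ℝ) * (G : ℝ) := by
    have h1 := Finset.card_le_card hBsub
    have h2 := Finset.card_union_le (Finset.Icc 0 G) (Wd.biUnion fun j => Finset.Ioc j (j + G))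
    have h3 := Finset.card_biUnion_le (s := Wd) (t := fun j => Finset.Ioc j (j + G))
    have h4 : ∑ j ∈ Wd, (Finset.Ioc j (j + G)).card = Wd.card * G := by
      calc ∑ j ∈ Wd, (Finset.Ioc j (j + G)).card = ∑ _j ∈ Wd, G :=
            Finset.sum_congr rfl (fun j _ => by rw [Nat.card_Ioc]; omega)
        _ = Wd.card * G := by rw [Finset.sum_const, smul_eq_mul]
    have h5 : (Finset.Icc 0 G).card = G + 1 := by rw [Nat.card_Icc]; omega
    have h6 : B.card ≤ (G + 1) + Wd.card * G := by
      have h7 : (Wd.biUnion fun j => Finset.Ioc j (j + G)).card ≤ Wd.card * G := h4 ▸ h3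
      calc B.card ≤ _ := h1
        _ ≤ _ := h2
        _ ≤ (G + 1) + Wd.card * G := by rw [h5]; exact Nat.add_le_add le_rfl h7
    calc (B.card : ℝ) ≤ (((G + 1) + Wd.card * G : ℕ) : ℝ) := Nat.cast_le.mpr h6
      _ = ((G : ℝ) + 1) + (Wd.card : ℝ) * (G : ℝ) := by push_cast; ring
  -- split the sum
  set Gd : Finset ℕ := I.filter
    (fun m => (G + 1 ≤ m ∧ ∀ j, m - G ≤ j → j < m → e j ≤ c / 2)) with hGd
  have hsplit : (∑ m ∈ I, a m) = (∑ m ∈ Gd, a m) + ∑ m ∈ B, a m := by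
    rw [hB, hGd]
    exact (Finset.sum_filter_add_sum_filter_not I
      (fun m => (G + 1 ≤ m ∧ ∀ j, m - G ≤ j → j < m → e j ≤ c / 2)) a).symm
  have hgood_sum : (∑ m ∈ Gd, a m) ≤ ((n : ℝ) + 1) * ρ ^ G := by
    have h1 : (∑ m ∈ Gd, a m) ≤ Gd.card • ρ ^ G := by
      apply Finset.sum_le_card_nsmul
      intro m hm
      rw [hGd, Finset.mem_filter] at hm
      exact hgood m hm.2.1 hm.2.2
    have h2 : (Gd.card : ℝ) ≤ (n : ℝ) + 1 := by
      have h3 : Gd.card ≤ I.card := hGd ▸ Finset.card_filter_le I _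
      rw [hIcard] at h3
      calc (Gd.card : ℝ) ≤ ((n + 1 : ℕ) : ℝ) := Nat.cast_le.mpr h3
        _ = (n : ℝ) + 1 := by push_cast; ring
    rw [nsmul_eq_mul] at h1
    calc (∑ m ∈ Gd, a m) ≤ _ := h1
      _ ≤ ((n : ℝ) + 1) * ρ ^ G := mul_le_mul_of_nonneg_right h2 (by positivity)
  have hbad_sum : (∑ m ∈ B, a m) ≤ (B.card : ℝ) * M₀ := by
    have h1 : (∑ m ∈ B, a m) ≤ B.card • M₀ := Finset.sum_le_card_nsmul _ _ _ (fun m _ => haM m)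
    rwa [nsmul_eq_mul] at h1
  -- numerical wrap-up
  have hWdGM : (Wd.card : ℝ) * (G : ℝ) * M₀ ≤ ε * ((n : ℝ) + 1) / 16 := by
    have e1 : (Wd.card : ℝ) * c ≤ 2 * (δw * ((n : ℝ) + (G : ℝ))) := by linarith
    have e2 : (Wd.card : ℝ) * c * (32 * (G : ℝ) * M₀)
        ≤ 2 * (δw * ((n : ℝ) + (G : ℝ))) * (32 * (G : ℝ) * M₀) :=
      mul_le_mul_of_nonneg_right e1 (by positivity)
    have e3 : 2 * (δw * ((n : ℝ) + (G : ℝ))) * (32 * (G : ℝ) * M₀)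
        = (ε * c) * ((G : ℝ) * ((n : ℝ) + (G : ℝ))) / ((G : ℝ) + 1) := by
      rw [hδw]
      field_simp
      ring
    have e4 : (ε * c) * ((G : ℝ) * ((n : ℝ) + (G : ℝ))) / ((G : ℝ) + 1)
        ≤ (ε * c) * ((n : ℝ) + (G : ℝ)) := by
      rw [div_le_iff₀ (by positivity)]
      have hng : (0 : ℝ) ≤ (n : ℝ) + (G : ℝ) := by positivity
      nlinarith [mul_nonneg (mul_nonneg hε.le hc.le) hng]
    have e5 : (ε * c) * ((n : ℝ) + (G : ℝ)) ≤ (ε * c) * (2 * ((n : ℝ) + 1)) := by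
      apply mul_le_mul_of_nonneg_left _ (by positivity)
      have : (G : ℝ) ≤ (n : ℝ) := Nat.cast_le.mpr hnG
      linarith
    have e6 : (Wd.card : ℝ) * c * (32 * (G : ℝ) * M₀) ≤ (ε * c) * (2 * ((n : ℝ) + 1)) := by
      linarith
    have e7 : ((Wd.card : ℝ) * (G : ℝ) * M₀ * 32) * c ≤ (ε * ((n : ℝ) + 1) * 2) * c := by
      nlinarith
    have e8 := le_of_mul_le_mul_right e7 hc
    linarith
  have htotal : (∑ m ∈ I, a m) < ε * ((n : ℝ) + 1) := by
    have f1 : ((G : ℝ) + 1) * M₀ ≤ ε * ((n : ℝ) + 1) / 4 := by nlinarith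
    have f2 : ((n : ℝ) + 1) * ρ ^ G ≤ ((n : ℝ) + 1) * (ε / 4) :=
      mul_le_mul_of_nonneg_left hρG.le (by positivity)
    have f3 : (∑ m ∈ B, a m) ≤ (((G : ℝ) + 1) + (Wd.card : ℝ) * (G : ℝ)) * M₀ :=
      le_trans hbad_sum (mul_le_mul_of_nonneg_right hBcard hM₀0.le)
    have f4 : (((G : ℝ) + 1) + (Wd.card : ℝ) * (G : ℝ)) * M₀
        = ((G : ℝ) + 1) * M₀ + (Wd.card : ℝ) * (G : ℝ) * M₀ := by ring
    rw [hsplit]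
    nlinarith [hε]
  rw [sub_zero]
  have hpos : (0 : ℝ) < (n : ℝ) + 1 := by positivity
  have hnonneg : 0 ≤ (∑ i ∈ Finset.range (n + 1), a (k + i)) :=
    Finset.sum_nonneg (fun i _ => ha0 _)
  rw [abs_of_nonneg (div_nonneg hnonneg hpos.le), div_lt_iff₀ hpos]
  rw [hsum_eq]
  linarith



theorem spectralRadius_eq_gauge_const'
    {H : Type*} [NormedAddCommGroup H] [InnerProductSpace ℂ H] [CompleteSpace H]
    (p : ℕ → ℝ) (c : ℝ) (hp : IsGauge p c)
    (T : H →L[ℂ] H) (hdom : ∀ n : ℕ, 1 ≤ n → ‖T ^ n‖ ≤ p n)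
    (hcompat : ¬ AlmostConvergentR (fun n => ‖T ^ n‖ / p n) 0) :
    spectralRadius ℂ T = ENNReal.ofReal c := by
  have hc : 0 < c := hp.2.1
  have gel := spectrum.pow_norm_pow_one_div_tendsto_nhds_spectralRadius T
  have main : ∀ c'' : ℝ, c < c'' → spectralRadius ℂ T ≤ ENNReal.ofReal c'' := by
    intro c'' hc''
    have h1 : c < (c + c'') / 2 := by linarith
    have h2 : (c + c'') / 2 < c'' := by linarith
    have hc'0 : 0 < (c + c'') / 2 := lt_trans hc h1
    have hc''0 : 0 < c'' := lt_trans hc'0 h2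
    obtain ⟨M, hM0, hM⟩ := gauge_growth p c hp h1
    have hev : ∀ᶠ n : ℕ in Filter.atTop, ‖T ^ n‖ ≤ c'' ^ n := by
      have hrat : 1 < c'' / ((c + c'') / 2) := (one_lt_div hc'0).mpr h2
      have htends : Filter.Tendsto (fun n : ℕ => (c'' / ((c + c'') / 2)) ^ n)
          Filter.atTop Filter.atTop := tendsto_pow_atTop_atTop_of_one_lt hrat
      filter_upwards [htends.eventually_ge_atTop M, Filter.eventually_ge_atTop 1]
        with n hn hn1
      calc ‖T ^ n‖ ≤ p n := hdom n hn1
        _ ≤ M * ((c + c'') / 2) ^ n := hM n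
        _ ≤ ((c'' / ((c + c'') / 2)) ^ n) * ((c + c'') / 2) ^ n :=
            mul_le_mul_of_nonneg_right hn (by positivity)
        _ = c'' ^ n := by rw [← mul_pow]; congr 1; field_simp
    apply le_of_tendsto gel
    filter_upwards [hev, Filter.eventually_ge_atTop 1] with n hn hn1
    apply ENNReal.ofReal_le_ofReal
    have h3 : ‖T ^ n‖ ^ (1 / (n : ℝ)) ≤ (c'' ^ n) ^ (1 / (n : ℝ)) :=
      Real.rpow_le_rpow (norm_nonneg _) hn (by positivity)
    have hn0 : ((n : ℝ)) ≠ 0 := by positivity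
    calc ‖T ^ n‖ ^ (1 / (n : ℝ)) ≤ (c'' ^ n) ^ (1 / (n : ℝ)) := h3
      _ = c'' := by
        rw [← Real.rpow_natCast c'' n, ← Real.rpow_mul hc''0.le, mul_one_div,
          div_self hn0, Real.rpow_one]
  have hub : spectralRadius ℂ T ≤ ENNReal.ofReal c := by
    by_contra hcon
    push_neg at hcon
    have hne : spectralRadius ℂ T ≠ ⊤ := by
      intro htop
      have h := main (c + 1) (by linarith)
      rw [htop, top_le_iff] at h
      exact ENNReal.ofReal_ne_top h
    have hcr : c < (spectralRadius ℂ T).toReal := by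
      have h := ENNReal.toReal_strict_mono hne hcon
      rwa [ENNReal.toReal_ofReal hc.le] at h
    have h2 := main ((c + (spectralRadius ℂ T).toReal) / 2) (by linarith)
    have h3 : (spectralRadius ℂ T).toReal ≤ (c + (spectralRadius ℂ T).toReal) / 2 := by
      have h4 := ENNReal.toReal_mono ENNReal.ofReal_ne_top h2
      rwa [ENNReal.toReal_ofReal (by linarith)] at h4
    linarith
  by_contra hne
  have hlt : spectralRadius ℂ T < ENNReal.ofReal c := lt_of_le_of_ne hub hne
  have hfin : spectralRadius ℂ T ≠ ⊤ := ne_top_of_lt (lt_of_lt_of_le hlt le_top)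
  have hσ0 : 0 ≤ (spectralRadius ℂ T).toReal := ENNReal.toReal_nonneg
  have hσc : (spectralRadius ℂ T).toReal < c := by
    have h := ENNReal.toReal_strict_mono ENNReal.ofReal_ne_top hlt
    rwa [ENNReal.toReal_ofReal hc.le] at h
  set σ : ℝ := (spectralRadius ℂ T).toReal with hσ
  have ht0 : 0 < (σ + c) / 2 := by
    have : 0 < σ + c := by linarith
    linarith
  have htc : (σ + c) / 2 < c := by linarith
  have hσt : σ < (σ + c) / 2 := by linarith
  have hspec : spectralRadius ℂ T < ENNReal.ofReal ((σ + c) / 2) := by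
    rw [← ENNReal.ofReal_toReal hfin]
    exact (ENNReal.ofReal_lt_ofReal_iff ht0).mpr hσt
  have hev := gel.eventually_lt_const hspec
  obtain ⟨D₀, hD₀⟩ := Filter.eventually_atTop.mp (hev.and (Filter.eventually_ge_atTop 1))
  have hD : ∀ n, max D₀ 1 ≤ n → ‖T ^ n‖ ≤ ((σ + c) / 2) ^ n := by
    intro n hn
    have hn1 : 1 ≤ n := le_trans (le_max_right _ _) hn
    obtain ⟨h1, _⟩ := hD₀ n (le_trans (le_max_left _ _) hn)
    have h2 : ‖T ^ n‖ ^ (1 / (n : ℝ)) < (σ + c) / 2 :=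
      (ENNReal.ofReal_lt_ofReal_iff ht0).mp h1
    have hn0 : ((n : ℝ)) ≠ 0 := by positivity
    have h3 : (‖T ^ n‖ ^ (1 / (n : ℝ))) ^ (n : ℕ) ≤ ((σ + c) / 2) ^ n :=
      pow_le_pow_left₀ (Real.rpow_nonneg (norm_nonneg _) _) h2.le n
    rwa [← Real.rpow_natCast (‖T ^ n‖ ^ (1 / (n : ℝ))) n, ← Real.rpow_mul (norm_nonneg _),
      one_div, inv_mul_cancel₀ hn0, Real.rpow_one] at h3
  exact hcompat (key_ac p c hp T hdom ht0 htc (max D₀ 1) hD)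


/-- An operator on a Hilbert space compatible with a gauge `p` (dominated by `p`
and `‖T^n‖/p(n)` does not almost converge to `0`) has spectral radius `c_p`. -/
theorem spectralRadius_eq_gauge_const
    {H : Type*} [NormedAddCommGroup H] [InnerProductSpace ℂ H] [CompleteSpace H]
    (p : ℕ → ℝ) (c : ℝ) (hp : IsGauge p c)
    (T : H →L[ℂ] H) (hdom : ∀ n : ℕ, 1 ≤ n → ‖T ^ n‖ ≤ p n)
    (hcompat : ¬ AlmostConvergentR (fun n => ‖T ^ n‖ / p n) 0) :
    spectralRadius ℂ T = ENNReal.ofReal c :=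
  spectralRadius_eq_gauge_const' p c hp T hdom hcompat
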